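/- Let μ₂ be a suitable σ-invariant probability on Ω with Hölder continuous Jacobian J₂, let μ₁ be a σ-invariant Borel probability, and let ξ: Ω → ℝ be Hölder continuous. Suppose that for θ in a neighborhood of 0 there are continuous functions φ_θ: Ω → (0,∞) and scalars λ_θ > 0, with φ₀ ≡ 1, λ₀ = 1, such that L_{log J₂ + θξ}(φ_θ) = λ_θ·φ_θ for each θ, and such that θ ↦ φ_θ is differentiable at 0 in the supremum norm and θ ↦ λ_θ is differentiable at 0. Define the normalized potentials log J^θ := log J₂ + θξ + log φ_θ − log(φ_θ∘σ) − log λ_θ. Then the derivative of λ satisfies (d/dθ)|_{θ=0} λ_θ = ∫ ξ dμ₂, and the map θ ↦ −∫ log J^θ dμ₁ is differentiable at θ = 0 with derivative −∫ ξ dμ₁ + ∫ ξ dμ₂; in particular, if μ₁ is suitable with continuous IRN J₁, then (d/dθ)|_{θ=0} D_KL(μ₁, μ^θ) = −∫ ξ dμ₁ + ∫ ξ dμ₂, where μ^θ is the σ-invariant probability with Jacobian J^θ and D_KL(μ₁, μ^θ) = ∫ (log J₁ − log J^θ) dμ₁. -/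

import Mathlib

open MeasureTheory

/-- The one-sided shift space `Ω = {1,…,d}^ℕ` on `d` symbols,
with the product topology and product σ-algebra. -/
abbrev Omega (d : ℕ) : Type := ℕ → Fin d

/-- The left shift `σ(x₁,x₂,x₃,…) = (x₂,x₃,…)`. -/
def shift {d : ℕ} (x : Omega d) : Omega d := fun n => x (n + 1)

/-- Prepend a symbol: `cons a x = ax = (a,x₁,x₂,…)`. -/
def cons {d : ℕ} (a : Fin d) (x : Omega d) : Omega d := fun n =>
  match n with
  | 0 => a
  | Nat.succ k => x k

/-- Hölder continuity with respect to the metric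
`d(x,y) = 2^{-min{ j : x_j ≠ y_j}}` on `Ω`: there are `C` and `α > 0` such that
whenever `x` and `y` agree on their first `n` coordinates (so `d(x,y) ≤ 2⁻ⁿ`),
`|f x - f y| ≤ C * (2⁻ⁿ)^α`. -/
def IsHolder {d : ℕ} (f : Omega d → ℝ) : Prop :=
  Continuous f ∧ ∃ C α : ℝ, 0 < α ∧ ∀ (x y : Omega d) (n : ℕ),
    (∀ k < n, x k = y k) → |f x - f y| ≤ C * ((2 : ℝ)⁻¹ ^ n) ^ α

/-- `μ` is a suitable probability with IRN (inverse Radon–Nikodym derivative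
along injective branches) `J`: the function `J` is continuous and strictly
positive, and for every symbol `j` and continuous `φ`,
`∫ φ(jx) J(jx) dμ(x) = ∫_{[j]} φ dμ` where `[j] = {x | x₁ = j}`. -/
structure IsSuitable {d : ℕ} (μ : Measure (Omega d)) (J : Omega d → ℝ) : Prop where
  cont : Continuous J
  pos : ∀ x, 0 < J x
  irn : ∀ (j : Fin d) (φ : Omega d → ℝ), Continuous φ →
    ∫ x, φ (cons j x) * J (cons j x) ∂μ = ∫ x in {x : Omega d | x 0 = j}, φ x ∂μ

/-- `J` is a Jacobian: continuous, strictly positive, and `Σ_a J(ax) = 1`. -/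
def IsJacobian {d : ℕ} (J : Omega d → ℝ) : Prop :=
  Continuous J ∧ (∀ x, 0 < J x) ∧ ∀ x : Omega d, ∑ a : Fin d, J (cons a x) = 1

/-- `ν = L*_{log J}(μ)`, the image of `μ` under the dual of the Ruelle operator
of the potential `log J` (note `e^{log J(ax)} = J(ax)`): for every continuous
`φ`, `∫ φ dν = ∫ L_{log J}φ dμ = ∫ Σ_a J(ax) φ(ax) dμ(x)`. -/
def IsDualRuelle {d : ℕ} (J : Omega d → ℝ) (μ ν : Measure (Omega d)) : Prop :=
  ∀ φ : Omega d → ℝ, Continuous φ →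
    ∫ x, φ x ∂ν = ∫ x, ∑ a : Fin d, J (cons a x) * φ (cons a x) ∂μ

/-- `μ` is σ-invariant: `∫ φ∘σ dμ = ∫ φ dμ` for all continuous `φ`. -/
def IsShiftInvariant {d : ℕ} (μ : Measure (Omega d)) : Prop :=
  ∀ φ : Omega d → ℝ, Continuous φ → ∫ x, φ (shift x) ∂μ = ∫ x, φ x ∂μ

/-- KL divergence `D_KL(μ₁,μ₂) = ∫ (log J₁ − log J₂) dμ₁` of suitable
probabilities, expressed via their IRNs `J₁`, `J₂`. -/
noncomputable def Dkl {d : ℕ} (μ₁ : Measure (Omega d)) (J₁ J₂ : Omega d → ℝ) : ℝ :=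
  ∫ x, (Real.log (J₁ x) - Real.log (J₂ x)) ∂μ₁

/-- infinitesimal variation of KL divergence: let `μ₂` be the
suitable σ-invariant probability with Hölder Jacobian `J₂` (so
`L*_{log J₂}μ₂ = μ₂`), `μ₁` a σ-invariant probability, and `ξ` Hölder. Suppose
for `|θ| < ε` there are continuous `φ_θ > 0` and `λ_θ > 0` with `φ₀ ≡ 1`,
`λ₀ = 1`, `L_{log J₂ + θξ}(φ_θ) = λ_θ·φ_θ`, with `θ ↦ φ_θ` differentiable at
`0` in supremum norm (as a curve in `C(Ω,ℝ)`) and `θ ↦ λ_θ` differentiable at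
`0`. With the normalized potentials
`log J^θ = log J₂ + θξ + log φ_θ − log(φ_θ∘σ) − log λ_θ`, one has
`(d/dθ)|₀ λ_θ = ∫ ξ dμ₂`, and `θ ↦ −∫ log J^θ dμ₁` is differentiable at `0`
with derivative `−∫ ξ dμ₁ + ∫ ξ dμ₂`; in particular, if `μ₁` is suitable with
continuous IRN `J₁`, then `(d/dθ)|₀ D_KL(μ₁,μ^θ) = −∫ ξ dμ₁ + ∫ ξ dμ₂`. -/
theorem deriv_of_kl_divergence
    (d : ℕ) (hd : 2 ≤ d) (J₂ J₁ ξ : Omega d → ℝ)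
    (μ₂ μ₁ : Measure (Omega d))
    [IsProbabilityMeasure μ₂] [IsProbabilityMeasure μ₁]
    (hJ₂ : IsJacobian J₂) (hJ₂H : IsHolder J₂)
    (h₂ : IsSuitable μ₂ J₂) (hinv₂ : IsShiftInvariant μ₂)
    (hfix : IsDualRuelle J₂ μ₂ μ₂)
    (hinv₁ : IsShiftInvariant μ₁)
    (h₁ : IsSuitable μ₁ J₁)
    (hξ : IsHolder ξ)
    (Φ : ℝ → C(Omega d, ℝ)) (lam : ℝ → ℝ) (ε : ℝ) (hε : 0 < ε)
    (hΦpos : ∀ θ, |θ| < ε → ∀ x, 0 < Φ θ x)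
    (hlampos : ∀ θ, |θ| < ε → 0 < lam θ)
    (heigen : ∀ θ, |θ| < ε → ∀ x : Omega d,
      ∑ a : Fin d, Real.exp (Real.log (J₂ (cons a x)) + θ * ξ (cons a x)) * Φ θ (cons a x)
        = lam θ * Φ θ x)
    (hΦ0 : Φ 0 = 1) (hlam0 : lam 0 = 1)
    (hΦdiff : DifferentiableAt ℝ Φ 0) (hlamdiff : DifferentiableAt ℝ lam 0) :
    deriv lam 0 = ∫ x, ξ x ∂μ₂ ∧
    HasDerivAt
      (fun θ => - ∫ z, (Real.log (J₂ z) + θ * ξ z + Real.log (Φ θ z)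
        - Real.log (Φ θ (shift z)) - Real.log (lam θ)) ∂μ₁)
      (- ∫ x, ξ x ∂μ₁ + ∫ x, ξ x ∂μ₂) 0 ∧
    HasDerivAt
      (fun θ => ∫ z, (Real.log (J₁ z) - (Real.log (J₂ z) + θ * ξ z + Real.log (Φ θ z)
        - Real.log (Φ θ (shift z)) - Real.log (lam θ))) ∂μ₁)
      (- ∫ x, ξ x ∂μ₁ + ∫ x, ξ x ∂μ₂) 0 := by
  
  classical
  have hshift : Continuous (shift (d := d)) := continuous_pi fun n => continuous_apply (n+1)
  have hInt : ∀ (μ : Measure (Omega d)) [IsProbabilityMeasure μ] (f : Omega d → ℝ),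
      Continuous f → Integrable f μ := fun μ _ f hf =>
    hf.integrable_of_hasCompactSupport (isClosed_tsupport f).isCompact
  have hlog : ∀ (f : Omega d → ℝ), Continuous f → (∀ x, 0 < f x) →
      Continuous fun x => Real.log (f x) := by
    intro f hf hp
    refine continuous_iff_continuousAt.2 fun x => ?_
    exact (Real.continuousAt_log (hp x).ne').comp hf.continuousAt
  set Ψ : Omega d → ℝ := fun x => (deriv Φ 0) x with hΨ
  have hΨc : Continuous Ψ := (deriv Φ 0).continuous
  have hnb : {θ : ℝ | |θ| < ε} ∈ nhds (0:ℝ) := by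
    have h : Metric.ball (0:ℝ) ε ∈ nhds 0 := Metric.ball_mem_nhds 0 hε
    refine Filter.mem_of_superset h ?_
    intro θ hθ
    simpa [Real.dist_eq] using hθ
  have hΦx : ∀ y, HasDerivAt (fun θ => Φ θ y) (Ψ y) 0 := fun y =>
    (ContinuousMap.evalCLM ℝ (M := ℝ) y).hasFDerivAt.comp_hasDerivAt 0 hΦdiff.hasDerivAt
  have hΦ0x : ∀ y, Φ 0 y = 1 := fun y => by rw [hΦ0]; rfl
  -- pointwise derivative of the eigenvalue equation
  have key : ∀ x : Omega d,
      ∑ a : Fin d, J₂ (cons a x) * (ξ (cons a x) + Ψ (cons a x)) = deriv lam 0 + Ψ x := by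
    intro x
    have hL : HasDerivAt (fun θ => ∑ a : Fin d,
        Real.exp (Real.log (J₂ (cons a x)) + θ * ξ (cons a x)) * Φ θ (cons a x))
        (∑ a : Fin d, J₂ (cons a x) * (ξ (cons a x) + Ψ (cons a x))) 0 := by
      refine HasDerivAt.fun_sum fun a _ => ?_
      have h1 : HasDerivAt (fun θ : ℝ =>
          Real.exp (Real.log (J₂ (cons a x)) + θ * ξ (cons a x)))
          (J₂ (cons a x) * ξ (cons a x)) 0 := by
        have h := (((hasDerivAt_id (0:ℝ)).mul_const (ξ (cons a x))).const_add
          (Real.log (J₂ (cons a x)))).exp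
        simpa [Real.exp_log (hJ₂.2.1 (cons a x)), mul_comm] using h
      have h2 := h1.mul (hΦx (cons a x))
      have h3 : J₂ (cons a x) * (ξ (cons a x) + Ψ (cons a x))
          = J₂ (cons a x) * ξ (cons a x) * Φ 0 (cons a x)
            + Real.exp (Real.log (J₂ (cons a x)) + 0 * ξ (cons a x)) * Ψ (cons a x) := by
        rw [hΦ0x]
        simp [Real.exp_log (hJ₂.2.1 (cons a x)), mul_add]
      rw [h3]
      exact h2
    have hR : HasDerivAt (fun θ => lam θ * Φ θ x) (deriv lam 0 + Ψ x) 0 := by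
      have h := hlamdiff.hasDerivAt.mul (hΦx x)
      simp only [hΦ0x, hlam0, mul_one, one_mul] at h
      exact h
    have heq : (fun θ => ∑ a : Fin d,
        Real.exp (Real.log (J₂ (cons a x)) + θ * ξ (cons a x)) * Φ θ (cons a x))
        =ᶠ[nhds (0:ℝ)] fun θ => lam θ * Φ θ x :=
      Filter.eventually_of_mem hnb fun θ hθ => heigen θ hθ x
    have hL' : HasDerivAt (fun θ => lam θ * Φ θ x)
        (∑ a : Fin d, J₂ (cons a x) * (ξ (cons a x) + Ψ (cons a x))) 0 :=
      hL.congr_of_eventuallyEq heq.symm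
    exact hL'.unique hR
  have hξΨc : Continuous fun y => ξ y + Ψ y := hξ.1.add hΨc
  have hderiv_lam : deriv lam 0 = ∫ x, ξ x ∂μ₂ := by
    have h1 : ∫ x, (ξ x + Ψ x) ∂μ₂
        = ∫ x, ∑ a : Fin d, J₂ (cons a x) * (ξ (cons a x) + Ψ (cons a x)) ∂μ₂ :=
      hfix _ hξΨc
    rw [integral_add (hInt μ₂ _ hξ.1) (hInt μ₂ _ hΨc)] at h1
    have h2 : ∫ x, ∑ a : Fin d, J₂ (cons a x) * (ξ (cons a x) + Ψ (cons a x)) ∂μ₂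
        = ∫ x, (deriv lam 0 + Ψ x) ∂μ₂ := by
      refine integral_congr_ae (Filter.Eventually.of_forall fun x => key x)
    rw [h2, integral_add (integrable_const _) (hInt μ₂ _ hΨc), integral_const] at h1
    simp only [measure_univ, probReal_univ, ENNReal.toReal_one, smul_eq_mul, one_mul, one_smul] at h1
    linarith
  -- the integral against μ₁, simplified on the neighborhood
  set I₁ : ℝ := ∫ x, ξ x ∂μ₁ with hI₁
  set C : ℝ := ∫ z, Real.log (J₂ z) ∂μ₁ with hC
  have hlogJ₂c : Continuous fun z => Real.log (J₂ z) := hlog _ hJ₂.1 hJ₂.2.1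
  have hFeq : ∀ θ : ℝ, |θ| < ε →
      ∫ z, (Real.log (J₂ z) + θ * ξ z + Real.log (Φ θ z)
        - Real.log (Φ θ (shift z)) - Real.log (lam θ)) ∂μ₁
      = C + θ * I₁ - Real.log (lam θ) := by
    intro θ hθ
    have hg3c : Continuous fun z => Real.log (Φ θ z) :=
      hlog _ (Φ θ).continuous (hΦpos θ hθ)
    have hg4c : Continuous fun z => Real.log (Φ θ (shift z)) := hg3c.comp hshift
    have hi1 : Integrable (fun z => Real.log (J₂ z)) μ₁ := hInt μ₁ _ hlogJ₂c
    have hi2 : Integrable (fun z => θ * ξ z) μ₁ := hInt μ₁ _ (continuous_const.mul hξ.1)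
    have hi3 : Integrable (fun z => Real.log (Φ θ z)) μ₁ := hInt μ₁ _ hg3c
    have hi4 : Integrable (fun z => Real.log (Φ θ (shift z))) μ₁ := hInt μ₁ _ hg4c
    have hi5 : Integrable (fun _ : Omega d => Real.log (lam θ)) μ₁ := integrable_const _
    have hiC : Integrable (fun z => Real.log (J₂ z) + θ * ξ z) μ₁ := hi1.add hi2
    have hiB : Integrable (fun z => Real.log (J₂ z) + θ * ξ z + Real.log ((Φ θ) z)) μ₁ :=
      hiC.add hi3
    have hiA : Integrable (fun z => Real.log (J₂ z) + θ * ξ z + Real.log ((Φ θ) z)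
        - Real.log ((Φ θ) (shift z))) μ₁ := hiB.sub hi4
    rw [integral_sub hiA hi5, integral_sub hiB hi4, integral_add hiC hi3, integral_add hi1 hi2]
    have hinv : ∫ z, Real.log (Φ θ (shift z)) ∂μ₁ = ∫ z, Real.log (Φ θ z) ∂μ₁ :=
      hinv₁ _ hg3c
    rw [hinv, integral_const]
    have hmul : ∫ z, θ * ξ z ∂μ₁ = θ * I₁ := by
      rw [hI₁, integral_const_mul]
    rw [hmul]
    simp only [measure_univ, probReal_univ, ENNReal.toReal_one, one_smul, smul_eq_mul, one_mul]
    ring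
  have hloglam : HasDerivAt (fun θ => Real.log (lam θ)) (deriv lam 0) 0 := by
    have h := hlamdiff.hasDerivAt.log (by rw [hlam0]; exact one_ne_zero)
    simpa [hlam0] using h
  have hG : HasDerivAt (fun θ : ℝ => -(C + θ * I₁ - Real.log (lam θ)))
      (- I₁ + ∫ x, ξ x ∂μ₂) 0 := by
    have h := ((((hasDerivAt_id (0:ℝ)).mul_const I₁).const_add C).sub hloglam).neg
    have : -(I₁ - deriv lam 0) = - I₁ + ∫ x, ξ x ∂μ₂ := by
      rw [hderiv_lam]; ring
    rw [← this]
    simp only [id_eq, one_mul] at h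
    exact h
  have heqF : (fun θ : ℝ => - ∫ z, (Real.log (J₂ z) + θ * ξ z + Real.log (Φ θ z)
        - Real.log (Φ θ (shift z)) - Real.log (lam θ)) ∂μ₁)
      =ᶠ[nhds (0:ℝ)] fun θ => -(C + θ * I₁ - Real.log (lam θ)) :=
    Filter.eventually_of_mem hnb fun θ hθ => by dsimp only; rw [hFeq θ hθ]
  have part2 : HasDerivAt
      (fun θ => - ∫ z, (Real.log (J₂ z) + θ * ξ z + Real.log (Φ θ z)
        - Real.log (Φ θ (shift z)) - Real.log (lam θ)) ∂μ₁)
      (- ∫ x, ξ x ∂μ₁ + ∫ x, ξ x ∂μ₂) 0 :=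
    hG.congr_of_eventuallyEq heqF
  refine ⟨hderiv_lam, part2, ?_⟩
  -- third part: KL divergence
  set K : ℝ := ∫ z, Real.log (J₁ z) ∂μ₁ with hK
  have hlogJ₁c : Continuous fun z => Real.log (J₁ z) := hlog _ h₁.cont h₁.pos
  have heqD : (fun θ : ℝ => ∫ z, (Real.log (J₁ z) - (Real.log (J₂ z) + θ * ξ z
        + Real.log (Φ θ z) - Real.log (Φ θ (shift z)) - Real.log (lam θ))) ∂μ₁)
      =ᶠ[nhds (0:ℝ)] fun θ => K + -(C + θ * I₁ - Real.log (lam θ)) := by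
    refine Filter.eventually_of_mem hnb fun θ hθ => ?_
    dsimp only
    have hg3c : Continuous fun z => Real.log (Φ θ z) :=
      hlog _ (Φ θ).continuous (hΦpos θ hθ)
    have hScont : Continuous fun z => Real.log (J₂ z) + θ * ξ z + Real.log (Φ θ z)
        - Real.log (Φ θ (shift z)) - Real.log (lam θ) :=
      ((((hlogJ₂c.add (continuous_const.mul hξ.1)).add hg3c).sub
        (hg3c.comp hshift)).sub continuous_const)
    rw [integral_sub (hInt μ₁ _ hlogJ₁c) (hInt μ₁ _ hScont), hFeq θ hθ]
    ring
  have hGD : HasDerivAt (fun θ : ℝ => K + -(C + θ * I₁ - Real.log (lam θ)))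
      (- ∫ x, ξ x ∂μ₁ + ∫ x, ξ x ∂μ₂) 0 := hG.const_add K
  exact hGD.congr_of_eventuallyEq heqD
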